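/- For every d ≥ 1 and every finite set A of affine hyperplanes in ℝ^d, there exists an affine cylindrical decomposition of ℝ^d that is compatible with A. -/

import Mathlib

/-- The cylinder C × ℝ above a set C ⊆ ℝ^i. -/
def cylinder {i : ℕ} (C : Set (Fin i → ℝ)) : Set (Fin (i+1) → ℝ) :=
  {x | Fin.init x ∈ C}

/-- The section of the cylinder above C given by the j-th section mapping. -/
def sectionCell {i r : ℕ} (C : Set (Fin i → ℝ)) (ξ : Fin r → ((Fin i → ℝ) →ᵃ[ℝ] ℝ))
    (j : Fin r) : Set (Fin (i+1) → ℝ) :=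
  {x | Fin.init x ∈ C ∧ x (Fin.last i) = ξ j (Fin.init x)}

/-- The j-th sector of the cylinder above C: the set of points strictly above the
section mappings with index < j and strictly below those with index ≥ j.  For j = 0
this is the part below all sections, for j = r the part above all sections, and for
r = 0 it is the whole cylinder C × ℝ. -/
def sectorCell {i r : ℕ} (C : Set (Fin i → ℝ)) (ξ : Fin r → ((Fin i → ℝ) →ᵃ[ℝ] ℝ))
    (j : Fin (r+1)) : Set (Fin (i+1) → ℝ) :=
  {x | Fin.init x ∈ C ∧ ∀ k : Fin r,
    (k.castSucc < j → ξ k (Fin.init x) < x (Fin.last i)) ∧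
    (j ≤ k.castSucc → x (Fin.last i) < ξ k (Fin.init x))}

/-- An affine cylindrical decomposition of ℝ^d. -/
structure AffineCD (d : ℕ) where
  /-- The partition of ℝ^i, for each i ≤ d. -/
  cells : ∀ i : ℕ, Set (Set (Fin i → ℝ))
  finite : ∀ i, i ≤ d → (cells i).Finite
  level_zero : cells 0 = {Set.univ}
  nonempty : ∀ i, i ≤ d → ∀ C ∈ cells i, C.Nonempty
  covers : ∀ i, i ≤ d → ⋃₀ cells i = Set.univ
  pairwise_disjoint : ∀ i, i ≤ d → ∀ C1 ∈ cells i, ∀ C2 ∈ cells i,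
    C1 ≠ C2 → Disjoint C1 C2
  /-- Above each cell of level i there are finitely many ordered section mappings,
  and the cells of level i+1 are exactly the sections and sectors above the cells
  of level i. -/
  stack : ∀ i, i < d →
    ∃ (r : Set (Fin i → ℝ) → ℕ)
      (ξ : ∀ C : Set (Fin i → ℝ), Fin (r C) → ((Fin i → ℝ) →ᵃ[ℝ] ℝ)),
      (∀ C ∈ cells i, ∀ j k : Fin (r C), j < k → ∀ x ∈ C, ξ C j x < ξ C k x) ∧
      cells (i+1) = ⋃ C ∈ cells i,
        (Set.range (sectionCell C (ξ C)) ∪ Set.range (sectorCell C (ξ C)))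

/-- A cylindrical decomposition of ℝ^d is compatible with a finite set of affine
hyperplanes (each given by a defining affine function) if every defining function has
constant sign on every d-cell. -/
def CompatibleWith {d : ℕ} (cd : AffineCD d) (A : Finset ((Fin d → ℝ) →ᵃ[ℝ] ℝ)) : Prop :=
  ∀ h ∈ A, ∀ C ∈ cd.cells d,
    (∀ x ∈ C, h x = 0) ∨ (∀ x ∈ C, 0 < h x) ∨ (∀ x ∈ C, h x < 0)

noncomputable section
open Classical

/-- linear map y ↦ snoc y 0 -/
def snocLin (d : ℕ) : (Fin d → ℝ) →ₗ[ℝ] (Fin (d+1) → ℝ) where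
  toFun y := Fin.snoc y 0
  map_add' y z := by
    funext i
    induction i using Fin.lastCases <;> simp
  map_smul' c y := by
    funext i
    induction i using Fin.lastCases <;> simp

variable {d : ℕ}

def coefLast (h : (Fin (d+1) → ℝ) →ᵃ[ℝ] ℝ) : ℝ := h.linear (Pi.single (Fin.last d) 1)

def resZero (h : (Fin (d+1) → ℝ) →ᵃ[ℝ] ℝ) : (Fin d → ℝ) →ᵃ[ℝ] ℝ :=
  h.comp (snocLin d).toAffineMap

lemma resZero_apply (h : (Fin (d+1) → ℝ) →ᵃ[ℝ] ℝ) (y : Fin d → ℝ) :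
    resZero h y = h (Fin.snoc y 0) := rfl

lemma snoc_decomp (y : Fin d → ℝ) (t : ℝ) :
    (Fin.snoc y t : Fin (d+1) → ℝ) = t • (Pi.single (Fin.last d) 1 : Fin (d+1) → ℝ) + (Fin.snoc y 0 : Fin (d+1) → ℝ) := by
  funext i
  induction i using Fin.lastCases with
  | last => simp
  | cast k => simp [Fin.snoc_castSucc, Pi.single_apply, (Fin.castSucc_lt_last k).ne]

lemma affine_decomp (h : (Fin (d+1) → ℝ) →ᵃ[ℝ] ℝ) (x : Fin (d+1) → ℝ) :
    h x = resZero h (Fin.init x) + x (Fin.last d) * coefLast h := by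
  conv_lhs => rw [← Fin.snoc_init_self x, snoc_decomp]
  have := h.map_vadd (Fin.snoc (Fin.init x) (0:ℝ)) (x (Fin.last d) • (Pi.single (Fin.last d) 1 : Fin (d+1) → ℝ))
  simp only [vadd_eq_add] at this
  rw [this, resZero_apply, map_smul, coefLast]
  ring_nf

def xiMap (h : (Fin (d+1) → ℝ) →ᵃ[ℝ] ℝ) : (Fin d → ℝ) →ᵃ[ℝ] ℝ :=
  (-(coefLast h)⁻¹) • resZero h

lemma key_eq (h : (Fin (d+1) → ℝ) →ᵃ[ℝ] ℝ) (hc : coefLast h ≠ 0) (x : Fin (d+1) → ℝ) :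
    h x = coefLast h * (x (Fin.last d) - xiMap h (Fin.init x)) := by
  rw [affine_decomp h x]
  have : xiMap h (Fin.init x) = -(coefLast h)⁻¹ * resZero h (Fin.init x) := by
    simp [xiMap]
  rw [this]
  have hcc : coefLast h * (coefLast h)⁻¹ = 1 := mul_inv_cancel₀ hc
  linear_combination (-(resZero h (Fin.init x))) * hcc

def SignConst {n : ℕ} (g : (Fin n → ℝ) →ᵃ[ℝ] ℝ) (C : Set (Fin n → ℝ)) : Prop :=
  (∀ x ∈ C, g x = 0) ∨ (∀ x ∈ C, 0 < g x) ∨ (∀ x ∈ C, g x < 0)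

lemma SignConst.eq_propagate {n : ℕ} {g : (Fin n → ℝ) →ᵃ[ℝ] ℝ} {C : Set (Fin n → ℝ)}
    (hs : SignConst g C) {x : Fin n → ℝ} (hx : x ∈ C) (h0 : g x = 0) :
    ∀ y ∈ C, g y = 0 := by
  rcases hs with h | h | h
  · exact h
  · exact absurd (h x hx) (by rw [h0]; exact lt_irrefl 0)
  · exact absurd (h x hx) (by rw [h0]; exact lt_irrefl 0)

lemma SignConst.neg_propagate {n : ℕ} {g : (Fin n → ℝ) →ᵃ[ℝ] ℝ} {C : Set (Fin n → ℝ)}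
    (hs : SignConst g C) {x : Fin n → ℝ} (hx : x ∈ C) (h0 : g x < 0) :
    ∀ y ∈ C, g y < 0 := by
  rcases hs with h | h | h
  · exact absurd (h x hx) (by intro h'; rw [h'] at h0; exact lt_irrefl 0 h0)
  · exact absurd (h x hx) (by intro h'; linarith)
  · exact h

/-- The set of restrictions/projections to level d. -/
def projSet (A : Finset ((Fin (d+1) → ℝ) →ᵃ[ℝ] ℝ)) : Finset ((Fin d → ℝ) →ᵃ[ℝ] ℝ) :=
  A.image resZero ∪ (A ×ˢ A).image (fun p => xiMap p.1 - xiMap p.2)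

lemma resZero_mem_projSet {A : Finset ((Fin (d+1) → ℝ) →ᵃ[ℝ] ℝ)} {h} (hh : h ∈ A) :
    resZero h ∈ projSet A := by
  apply Finset.mem_union_left
  exact Finset.mem_image_of_mem _ hh

lemma xi_sub_mem_projSet {A : Finset ((Fin (d+1) → ℝ) →ᵃ[ℝ] ℝ)} {h g} (hh : h ∈ A)
    (hg : g ∈ A) : xiMap h - xiMap g ∈ projSet A := by
  refine Finset.mem_union.2 (Or.inr ?_)
  refine Finset.mem_image.2 ⟨(h, g), Finset.mem_product.2 ⟨hh, hg⟩, rfl⟩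

def pt {n : ℕ} (C : Set (Fin n → ℝ)) : Fin n → ℝ :=
  if h : C.Nonempty then h.choose else 0

lemma pt_mem {n : ℕ} {C : Set (Fin n → ℝ)} (h : C.Nonempty) : pt C ∈ C := by
  rw [pt, dif_pos h]; exact h.choose_spec

variable (A : Finset ((Fin (d+1) → ℝ) →ᵃ[ℝ] ℝ))

def Vals (C : Set (Fin d → ℝ)) : Finset ℝ :=
  (A.filter (fun h => coefLast h ≠ 0)).image (fun h => xiMap h (pt C))

def rC (C : Set (Fin d → ℝ)) : ℕ := (Vals A C).card

def oiso (C : Set (Fin d → ℝ)) : Fin (rC A C) ≃o (Vals A C : Finset ℝ) :=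
  (Vals A C).orderIsoOfFin rfl

lemma oiso_spec (C : Set (Fin d → ℝ)) (j : Fin (rC A C)) :
    ∃ h, (h ∈ A ∧ coefLast h ≠ 0) ∧ xiMap h (pt C) = (oiso A C j : ℝ) := by
  have hmem : (oiso A C j : ℝ) ∈ Vals A C := (oiso A C j).2
  rcases Finset.mem_image.1 hmem with ⟨h, hh, hval⟩
  exact ⟨h, by simpa using Finset.mem_filter.1 hh, hval⟩

def hsel (C : Set (Fin d → ℝ)) (j : Fin (rC A C)) : (Fin (d+1) → ℝ) →ᵃ[ℝ] ℝ :=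
  (oiso_spec A C j).choose

lemma hsel_mem (C : Set (Fin d → ℝ)) (j : Fin (rC A C)) :
    hsel A C j ∈ A ∧ coefLast (hsel A C j) ≠ 0 := (oiso_spec A C j).choose_spec.1

def ξsel (C : Set (Fin d → ℝ)) (j : Fin (rC A C)) : (Fin d → ℝ) →ᵃ[ℝ] ℝ :=
  xiMap (hsel A C j)

lemma ξsel_pt (C : Set (Fin d → ℝ)) (j : Fin (rC A C)) :
    ξsel A C j (pt C) = (oiso A C j : ℝ) := (oiso_spec A C j).choose_spec.2

section withC

variable {C : Set (Fin d → ℝ)}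
variable (HS : ∀ g ∈ projSet A, SignConst g C) (hCne : C.Nonempty)
include HS hCne

lemma xi_eq_on {h g : (Fin (d+1) → ℝ) →ᵃ[ℝ] ℝ} (hh : h ∈ A) (hg : g ∈ A)
    (heq : xiMap h (pt C) = xiMap g (pt C)) :
    ∀ x ∈ C, xiMap h x = xiMap g x := by
  have hs := HS _ (xi_sub_mem_projSet hh hg)
  have h0 : (xiMap h - xiMap g) (pt C) = 0 := by simp [heq]
  intro x hx
  have := hs.eq_propagate (pt_mem hCne) h0 x hx
  simpa [sub_eq_zero] using this

lemma xi_lt_on {h g : (Fin (d+1) → ℝ) →ᵃ[ℝ] ℝ} (hh : h ∈ A) (hg : g ∈ A)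
    (hlt : xiMap h (pt C) < xiMap g (pt C)) :
    ∀ x ∈ C, xiMap h x < xiMap g x := by
  have hs := HS _ (xi_sub_mem_projSet hh hg)
  have h0 : (xiMap h - xiMap g) (pt C) < 0 := by simp [sub_neg]; exact hlt
  intro x hx
  have := hs.neg_propagate (pt_mem hCne) h0 x hx
  simp only [AffineMap.coe_sub, Pi.sub_apply, sub_neg] at this
  exact this

lemma sel_strict {j k : Fin (rC A C)} (hjk : j < k) :
    ∀ x ∈ C, ξsel A C j x < ξsel A C k x := by
  apply xi_lt_on A HS hCne (hsel_mem A C j).1 (hsel_mem A C k).1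
  have : (oiso A C j : ℝ) < (oiso A C k : ℝ) := by
    exact_mod_cast (oiso A C).strictMono hjk
  rw [show xiMap (hsel A C j) = ξsel A C j from rfl,
      show xiMap (hsel A C k) = ξsel A C k from rfl, ξsel_pt, ξsel_pt]
  exact this

lemma sel_represent {h : (Fin (d+1) → ℝ) →ᵃ[ℝ] ℝ} (hh : h ∈ A)
    (hc : coefLast h ≠ 0) :
    ∃ m : Fin (rC A C), ∀ x ∈ C, xiMap h x = ξsel A C m x := by
  have hmem : xiMap h (pt C) ∈ Vals A C :=
    Finset.mem_image_of_mem _ (Finset.mem_filter.2 ⟨hh, hc⟩)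
  refine ⟨(oiso A C).symm ⟨_, hmem⟩, ?_⟩
  apply xi_eq_on A HS hCne hh (hsel_mem A C _).1
  rw [show xiMap (hsel A C _) = ξsel A C _ from rfl, ξsel_pt]
  rw [OrderIso.apply_symm_apply]

end withC

section generic

variable {i r : ℕ} {C : Set (Fin i → ℝ)} {ξ : Fin r → ((Fin i → ℝ) →ᵃ[ℝ] ℝ)}
variable (ord : ∀ j k : Fin r, j < k → ∀ x ∈ C, ξ j x < ξ k x)

lemma mem_sectionCell {x : Fin (i+1) → ℝ} {j : Fin r} :
    x ∈ sectionCell C ξ j ↔ Fin.init x ∈ C ∧ x (Fin.last i) = ξ j (Fin.init x) :=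
  Iff.rfl

lemma mem_sectorCell {x : Fin (i+1) → ℝ} {j : Fin (r+1)} :
    x ∈ sectorCell C ξ j ↔ Fin.init x ∈ C ∧ ∀ k : Fin r,
      (k.castSucc < j → ξ k (Fin.init x) < x (Fin.last i)) ∧
      (j ≤ k.castSucc → x (Fin.last i) < ξ k (Fin.init x)) :=
  Iff.rfl

include ord in
lemma ord_le {j k : Fin r} (hjk : j ≤ k) : ∀ x ∈ C, ξ j x ≤ ξ k x := by
  intro x hx
  rcases eq_or_lt_of_le hjk with h | h
  · rw [h]
  · exact (ord j k h x hx).le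

lemma section_nonempty (hCne : C.Nonempty) (j : Fin r) :
    (sectionCell C ξ j).Nonempty := by
  obtain ⟨y, hy⟩ := hCne
  refine ⟨Fin.snoc y (ξ j y), ?_, ?_⟩ <;> simp [hy]

include ord in
lemma sector_nonempty (hCne : C.Nonempty) (j : Fin (r+1)) :
    (sectorCell C ξ j).Nonempty := by
  obtain ⟨y, hy⟩ := hCne
  have hjr : (j : ℕ) ≤ r := Nat.lt_succ_iff.1 j.2
  -- choose the fibre value t
  by_cases hb : (j : ℕ) < r
  · by_cases ha : 0 < (j : ℕ)
    · set a : Fin r := ⟨(j : ℕ) - 1, by omega⟩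
      set b : Fin r := ⟨(j : ℕ), hb⟩
      have hab : ξ a y < ξ b y := ord a b (by rw [Fin.lt_def]; show (j:ℕ) - 1 < j; omega) y hy
      refine ⟨Fin.snoc y ((ξ a y + ξ b y)/2), ?_, ?_⟩
      · simpa using hy
      · intro k
        simp only [Fin.snoc_last, Fin.init_snoc]
        constructor
        · intro hk
          have hk' : (k : ℕ) < (j : ℕ) := hk
          have : ξ k y ≤ ξ a y := ord_le ord (by simp [a, Fin.le_def]; omega) y hy
          linarith
        · intro hk
          have hk' : (j : ℕ) ≤ (k : ℕ) := hk
          have : ξ b y ≤ ξ k y := ord_le ord (by simp [b, Fin.le_def]; omega) y hy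
          linarith
    · have hj0 : (j : ℕ) = 0 := by omega
      refine ⟨Fin.snoc y (ξ ⟨0, by omega⟩ y - 1), ?_, ?_⟩
      · simpa using hy
      · intro k
        simp only [Fin.snoc_last, Fin.init_snoc]
        constructor
        · intro hk
          exact absurd (show (k:ℕ) < (j:ℕ) from hk) (by omega)
        · intro _
          have : ξ ⟨0, by omega⟩ y ≤ ξ k y := ord_le ord (by simp [Fin.le_def]) y hy
          linarith
  · have hjr' : (j : ℕ) = r := by omega
    by_cases hr : 0 < r
    · refine ⟨Fin.snoc y (ξ ⟨r-1, by omega⟩ y + 1), ?_, ?_⟩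
      · simpa using hy
      · intro k
        simp only [Fin.snoc_last, Fin.init_snoc]
        constructor
        · intro _
          have : ξ k y ≤ ξ ⟨r-1, by omega⟩ y :=
            ord_le ord (by simp [Fin.le_def]; omega) y hy
          linarith
        · intro hk
          exact absurd (show (j:ℕ) ≤ (k:ℕ) from hk) (by have := k.2; omega)
    · have hr0 : r = 0 := by omega
      refine ⟨Fin.snoc y 0, ?_, ?_⟩
      · simpa using hy
      · intro k; exact absurd k.2 (by omega)

include ord in
lemma cylinder_cover {x : Fin (i+1) → ℝ} (hx : Fin.init x ∈ C) :
    (∃ j, x ∈ sectionCell C ξ j) ∨ (∃ j, x ∈ sectorCell C ξ j) := by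
  classical
  set t := x (Fin.last i) with ht
  by_cases hsec : ∃ j, ξ j (Fin.init x) = t
  · obtain ⟨j, hj⟩ := hsec
    exact Or.inl ⟨j, hx, hj.symm⟩
  · push_neg at hsec
    right
    set S : Finset (Fin r) := Finset.univ.filter (fun k => ξ k (Fin.init x) < t) with hS
    by_cases hSe : S.Nonempty
    · obtain m := S.max' hSe
      refine ⟨(S.max' hSe).succ, hx, ?_⟩
      intro k
      constructor
      · intro hk
        have hk' : (k : ℕ) < (S.max' hSe : ℕ) + 1 := hk
        have hkm : k ≤ S.max' hSe := by rw [Fin.le_def]; omega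
        have hmax : ξ (S.max' hSe) (Fin.init x) < t := by
          have := S.max'_mem hSe
          simp [hS] at this; exact this
        have := ord_le ord hkm (Fin.init x) hx
        linarith
      · intro hk
        have hk' : (S.max' hSe : ℕ) + 1 ≤ (k : ℕ) := hk
        by_contra hc
        push_neg at hc
        have hlt : ξ k (Fin.init x) < t := lt_of_le_of_ne hc (hsec k)
        have : k ∈ S := by simp [hS, hlt]
        have := S.le_max' k this
        rw [Fin.le_def] at this
        omega
    · refine ⟨0, hx, ?_⟩
      intro k
      constructor
      · intro hk
        exact absurd hk (by simp [Fin.lt_def])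
      · intro _
        have : ¬ ξ k (Fin.init x) < t := by
          intro hlt
          exact hSe ⟨k, by simp [hS, hlt]⟩
        exact lt_of_le_of_ne (not_lt.1 this) (Ne.symm (hsec k))

end generic
section generic2

variable {i r : ℕ} {C : Set (Fin i → ℝ)} {ξ : Fin r → ((Fin i → ℝ) →ᵃ[ℝ] ℝ)}
variable (ord : ∀ j k : Fin r, j < k → ∀ x ∈ C, ξ j x < ξ k x)

include ord in
lemma section_inj_pt {x : Fin (i+1) → ℝ} {j k : Fin r}
    (h1 : x ∈ sectionCell C ξ j) (h2 : x ∈ sectionCell C ξ k) : j = k := by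
  obtain ⟨hx, he1⟩ := h1
  obtain ⟨-, he2⟩ := h2
  rcases lt_trichotomy j k with h | h | h
  · have := ord j k h _ hx; rw [← he1, ← he2] at this; exact absurd this (lt_irrefl _)
  · exact h
  · have := ord k j h _ hx; rw [← he1, ← he2] at this; exact absurd this (lt_irrefl _)

lemma section_sector_pt {x : Fin (i+1) → ℝ} {j : Fin r} {j' : Fin (r+1)}
    (h1 : x ∈ sectionCell C ξ j) (h2 : x ∈ sectorCell C ξ j') : False := by
  obtain ⟨hx, he⟩ := h1
  obtain ⟨-, hs⟩ := h2
  rcases lt_or_ge j.castSucc j' with h | h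
  · have := (hs j).1 h; rw [he] at this; exact absurd this (lt_irrefl _)
  · have := (hs j).2 h; rw [he] at this; exact absurd this (lt_irrefl _)

lemma sector_inj_pt {x : Fin (i+1) → ℝ} {j j' : Fin (r+1)}
    (h1 : x ∈ sectorCell C ξ j) (h2 : x ∈ sectorCell C ξ j') : j = j' := by
  obtain ⟨hx, hs1⟩ := h1
  obtain ⟨-, hs2⟩ := h2
  by_contra hne
  rcases lt_trichotomy j j' with h | h | h
  · have hk : (j : ℕ) < r := by
      have := j'.2; have := Fin.lt_def.1 h; omega
    set k : Fin r := ⟨(j : ℕ), hk⟩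
    have hA := (hs1 k).2 (by rw [Fin.le_def]; simp [k])
    have hB := (hs2 k).1 (by rw [Fin.lt_def]; simpa [k] using Fin.lt_def.1 h)
    linarith
  · exact hne h
  · have hk : (j' : ℕ) < r := by
      have := j.2; have := Fin.lt_def.1 h; omega
    set k : Fin r := ⟨(j' : ℕ), hk⟩
    have hA := (hs2 k).2 (by rw [Fin.le_def]; simp [k])
    have hB := (hs1 k).1 (by rw [Fin.lt_def]; simpa [k] using Fin.lt_def.1 h)
    linarith

lemma mem_cyl_of_mem_union {x : Fin (i+1) → ℝ} {D : Set (Fin (i+1) → ℝ)}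
    (hD : D ∈ Set.range (sectionCell C ξ) ∪ Set.range (sectorCell C ξ))
    (hx : x ∈ D) : Fin.init x ∈ C := by
  rcases hD with ⟨j, rfl⟩ | ⟨j, rfl⟩
  · exact hx.1
  · exact hx.1

include ord in
lemma disjoint_same {D1 D2 : Set (Fin (i+1) → ℝ)}
    (h1 : D1 ∈ Set.range (sectionCell C ξ) ∪ Set.range (sectorCell C ξ))
    (h2 : D2 ∈ Set.range (sectionCell C ξ) ∪ Set.range (sectorCell C ξ))
    (hne : D1 ≠ D2) : Disjoint D1 D2 := by
  rw [Set.disjoint_left]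
  intro x hx1 hx2
  apply hne
  rcases h1 with ⟨j, rfl⟩ | ⟨j, rfl⟩ <;> rcases h2 with ⟨k, rfl⟩ | ⟨k, rfl⟩
  · rw [section_inj_pt ord hx1 hx2]
  · exact absurd (section_sector_pt hx1 hx2) not_false
  · exact absurd (section_sector_pt hx2 hx1) not_false
  · rw [sector_inj_pt hx1 hx2]

end generic2

section signnew

variable {d : ℕ} (A : Finset ((Fin (d+1) → ℝ) →ᵃ[ℝ] ℝ))
variable {C : Set (Fin d → ℝ)}
variable (HS : ∀ g ∈ projSet A, SignConst g C) (hCne : C.Nonempty)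

include HS hCne in
lemma signconst_on_new {h : (Fin (d+1) → ℝ) →ᵃ[ℝ] ℝ} (hh : h ∈ A)
    {D : Set (Fin (d+1) → ℝ)}
    (hD : D ∈ Set.range (sectionCell C (ξsel A C)) ∪
      Set.range (sectorCell C (ξsel A C))) :
    SignConst h D := by
  by_cases hc : coefLast h = 0
  · -- h only depends on the first d coordinates
    have hdec : ∀ x : Fin (d+1) → ℝ, h x = resZero h (Fin.init x) := by
      intro x; rw [affine_decomp h x, hc]; ring
    have hs := HS _ (resZero_mem_projSet hh)
    rcases hs with hs | hs | hs
    · exact Or.inl (fun x hx => by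
        rw [hdec]; exact hs _ (mem_cyl_of_mem_union hD hx))
    · exact Or.inr (Or.inl (fun x hx => by
        rw [hdec]; exact hs _ (mem_cyl_of_mem_union hD hx)))
    · exact Or.inr (Or.inr (fun x hx => by
        rw [hdec]; exact hs _ (mem_cyl_of_mem_union hD hx)))
  · obtain ⟨m, hm⟩ := sel_represent A HS hCne hh hc
    have hkey : ∀ x : Fin (d+1) → ℝ, Fin.init x ∈ C →
        h x = coefLast h * (x (Fin.last d) - ξsel A C m (Fin.init x)) := by
      intro x hx
      rw [key_eq h hc x, hm _ hx]
    rcases hD with ⟨j, rfl⟩ | ⟨j, rfl⟩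
    · -- a section
      rcases lt_trichotomy j m with hjm | hjm | hjm
      · -- ξ j < ξ m on C, so h x = c * (negative)
        have hneg : ∀ x ∈ sectionCell C (ξsel A C) j,
            x (Fin.last d) - ξsel A C m (Fin.init x) < 0 := by
          rintro x ⟨hx, he⟩
          have := sel_strict A HS hCne hjm _ hx
          rw [he]; linarith
        rcases lt_or_gt_of_ne hc with hcneg | hcpos
        · exact Or.inr (Or.inl (fun x hx =>
            (hkey x hx.1) ▸ mul_pos_of_neg_of_neg hcneg (hneg x hx)))
        · exact Or.inr (Or.inr (fun x hx =>
            (hkey x hx.1) ▸ mul_neg_of_pos_of_neg hcpos (hneg x hx)))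
      · subst hjm
        exact Or.inl (fun x hx => by
          rw [hkey x hx.1, hx.2]; ring)
      · have hpos : ∀ x ∈ sectionCell C (ξsel A C) j,
            0 < x (Fin.last d) - ξsel A C m (Fin.init x) := by
          rintro x ⟨hx, he⟩
          have := sel_strict A HS hCne hjm _ hx
          rw [he]; linarith
        rcases lt_or_gt_of_ne hc with hcneg | hcpos
        · exact Or.inr (Or.inr (fun x hx =>
            (hkey x hx.1) ▸ mul_neg_of_neg_of_pos hcneg (hpos x hx)))
        · exact Or.inr (Or.inl (fun x hx =>
            (hkey x hx.1) ▸ mul_pos hcpos (hpos x hx)))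
    · -- a sector
      rcases lt_or_ge m.castSucc j with hmj | hmj
      · have hpos : ∀ x ∈ sectorCell C (ξsel A C) j,
            0 < x (Fin.last d) - ξsel A C m (Fin.init x) := by
          rintro x ⟨hx, hs⟩
          have := (hs m).1 hmj
          linarith
        rcases lt_or_gt_of_ne hc with hcneg | hcpos
        · exact Or.inr (Or.inr (fun x hx =>
            (hkey x hx.1) ▸ mul_neg_of_neg_of_pos hcneg (hpos x hx)))
        · exact Or.inr (Or.inl (fun x hx =>
            (hkey x hx.1) ▸ mul_pos hcpos (hpos x hx)))
      · have hneg : ∀ x ∈ sectorCell C (ξsel A C) j,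
            x (Fin.last d) - ξsel A C m (Fin.init x) < 0 := by
          rintro x ⟨hx, hs⟩
          have := (hs m).2 hmj
          linarith
        rcases lt_or_gt_of_ne hc with hcneg | hcpos
        · exact Or.inr (Or.inl (fun x hx =>
            (hkey x hx.1) ▸ mul_pos_of_neg_of_neg hcneg (hneg x hx)))
        · exact Or.inr (Or.inr (fun x hx =>
            (hkey x hx.1) ▸ mul_neg_of_pos_of_neg hcpos (hneg x hx)))

end signnew

lemma step (d : ℕ) (A : Finset ((Fin (d+1) → ℝ) →ᵃ[ℝ] ℝ)) (cd' : AffineCD d)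
    (hsign : ∀ g ∈ projSet A, ∀ C ∈ cd'.cells d, SignConst g C) :
    ∃ cd : AffineCD (d+1), ∀ h ∈ A, ∀ D ∈ cd.cells (d+1), SignConst h D := by
  have HS : ∀ C ∈ cd'.cells d, ∀ g ∈ projSet A, SignConst g C :=
    fun C hC g hg => hsign g hg C hC
  have hCne : ∀ C ∈ cd'.cells d, C.Nonempty := cd'.nonempty d le_rfl
  have ordC : ∀ C ∈ cd'.cells d, ∀ j k : Fin (rC A C), j < k →
      ∀ x ∈ C, ξsel A C j x < ξsel A C k x :=
    fun C hC j k hjk => sel_strict A (HS C hC) (hCne C hC) hjk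
  set NEW : Set (Set (Fin (d+1) → ℝ)) := ⋃ C ∈ cd'.cells d,
    (Set.range (sectionCell C (ξsel A C)) ∪ Set.range (sectorCell C (ξsel A C)))
    with hNEW
  set cellsF : ∀ i : ℕ, Set (Set (Fin i → ℝ)) :=
    fun i => if h : i = d+1 then cast (by rw [h]) NEW else cd'.cells i with hcellsF
  have hne : ∀ i, i ≠ d+1 → cellsF i = cd'.cells i := fun i h => dif_neg h
  have htop : cellsF (d+1) = NEW := by
    simp only [hcellsF, dif_pos rfl]
    exact cast_eq _ NEW
  refine ⟨⟨cellsF, ?_, ?_, ?_, ?_, ?_, ?_⟩, ?_⟩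
  · -- finite
    intro i hi
    by_cases h : i = d+1
    · subst h
      rw [htop]
      exact (cd'.finite d le_rfl).biUnion
        (fun C _ => (Set.finite_range _).union (Set.finite_range _))
    · rw [hne i h]
      exact cd'.finite i (by omega)
  · -- level_zero
    rw [hne 0 (by omega)]
    exact cd'.level_zero
  · -- nonempty
    intro i hi C hC
    by_cases h : i = d+1
    · subst h
      rw [htop] at hC
      simp only [hNEW, Set.mem_iUnion] at hC
      obtain ⟨C', hC', hD⟩ := hC
      rcases hD with ⟨j, rfl⟩ | ⟨j, rfl⟩
      · exact section_nonempty (hCne C' hC') j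
      · exact sector_nonempty (ordC C' hC') (hCne C' hC') j
    · rw [hne i h] at hC
      exact cd'.nonempty i (by omega) C hC
  · -- covers
    intro i hi
    by_cases h : i = d+1
    · subst h
      rw [htop]
      apply Set.eq_univ_of_forall
      intro x
      have : Fin.init x ∈ ⋃₀ cd'.cells d := by rw [cd'.covers d le_rfl]; trivial
      obtain ⟨C, hC, hx⟩ := this
      rcases cylinder_cover (ordC C hC) hx with ⟨j, hj⟩ | ⟨j, hj⟩
      · exact ⟨_, Set.mem_biUnion hC (Or.inl ⟨j, rfl⟩), hj⟩
      · exact ⟨_, Set.mem_biUnion hC (Or.inr ⟨j, rfl⟩), hj⟩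
    · rw [hne i h]
      exact cd'.covers i (by omega)
  · -- pairwise disjoint
    intro i hi C1 h1 C2 h2 hne12
    by_cases h : i = d+1
    · subst h
      rw [htop] at h1 h2
      simp only [hNEW, Set.mem_iUnion] at h1 h2
      obtain ⟨C1', hC1', hD1⟩ := h1
      obtain ⟨C2', hC2', hD2⟩ := h2
      by_cases hcc : C1' = C2'
      · subst hcc
        exact disjoint_same (ordC C1' hC1') hD1 hD2 hne12
      · rw [Set.disjoint_left]
        intro x hx1 hx2
        have m1 := mem_cyl_of_mem_union hD1 hx1
        have m2 := mem_cyl_of_mem_union hD2 hx2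
        exact Set.disjoint_left.1
          (cd'.pairwise_disjoint d le_rfl C1' hC1' C2' hC2' hcc) m1 m2
    · rw [hne i h] at h1 h2
      exact cd'.pairwise_disjoint i (by omega) C1 h1 C2 h2 hne12
  · -- stack
    intro i hi
    by_cases h : i = d
    · subst h
      refine ⟨rC A, ξsel A, ?_, ?_⟩
      · rw [hne i (by omega)]
        exact ordC
      · rw [htop, hne i (by omega)]
    · have hi' : i < d := by omega
      obtain ⟨r, ξ, hord, hcells⟩ := cd'.stack i hi'
      refine ⟨r, ξ, ?_, ?_⟩
      · rw [hne i (by omega)]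
        exact hord
      · rw [hne i (by omega), hne (i+1) (by omega)]
        exact hcells
  · -- sign condition
    intro h hh D hD
    have hD : D ∈ cellsF (d+1) := hD
    rw [htop] at hD
    simp only [hNEW, Set.mem_iUnion] at hD
    obtain ⟨C, hC, hD⟩ := hD
    exact signconst_on_new A (HS C hC) (hCne C hC) hh hD

lemma key_lemma : ∀ d : ℕ, ∀ A : Finset ((Fin d → ℝ) →ᵃ[ℝ] ℝ),
    ∃ cd : AffineCD d, ∀ h ∈ A, ∀ C ∈ cd.cells d, SignConst h C := by
  intro d
  induction d with
  | zero =>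
    intro A
    refine ⟨⟨fun _ => {Set.univ}, fun _ _ => Set.finite_singleton _, rfl,
      ?_, ?_, ?_, ?_⟩, ?_⟩
    · intro i _ C hC
      rw [Set.mem_singleton_iff] at hC
      subst hC
      exact Set.univ_nonempty
    · intro i _
      exact Set.sUnion_singleton _
    · intro i _ C1 h1 C2 h2 hne12
      rw [Set.mem_singleton_iff] at h1 h2
      exact absurd (h1.trans h2.symm) hne12
    · intro i hi
      exact absurd hi (by omega)
    · intro h _ C _
      have hx : ∀ x : Fin 0 → ℝ, x = (fun j => j.elim0) := by
        intro x; funext j; exact j.elim0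
      rcases lt_trichotomy (h (fun j => j.elim0)) 0 with h0 | h0 | h0
      · exact Or.inr (Or.inr (fun x _ => by rw [hx x]; exact h0))
      · exact Or.inl (fun x _ => by rw [hx x]; exact h0)
      · exact Or.inr (Or.inl (fun x _ => by rw [hx x]; exact h0))
  | succ d ih =>
    intro A
    obtain ⟨cd', hcd'⟩ := ih (projSet A)
    exact step d A cd' hcd'

end
/-- For every d ≥ 1 and every finite set of affine hyperplanes in ℝ^d (each given by a
defining non-constant affine function), there exists an affine cylindrical decomposition
of ℝ^d compatible with it. -/
theorem exists_affineCD_compatible (d : ℕ) (hd : 1 ≤ d)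
    (A : Finset ((Fin d → ℝ) →ᵃ[ℝ] ℝ))
    (hA : ∀ h ∈ A, ¬ ∃ c : ℝ, ∀ x, h x = c) :
    ∃ cd : AffineCD d, CompatibleWith cd A := by
  obtain ⟨cd, hs⟩ := key_lemma d A
  exact ⟨cd, fun h hh C hC => hs h hh C hC⟩
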